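/- Let A and A' be discrete valuation rings with uniformizers t and t' respectively, and let φ : A → A' be a ring homomorphism with φ(t) = c·(t')ⁿ for some unit c of A' and some integer n ≥ 1. Let R be an A-algebra that is torsion-free as an A-module, let R' = A' ⊗_A R, and suppose there is x ∈ R with x ∉ tR and xⁿ ∈ tR. Then the image x' of x in R' does not lie in t'R', while the element x'/t' of the localization R'[t'⁻¹] is integral over R' and does not lie in the image of R'. In particular, R' is not integrally closed in R'[t'⁻¹]. (The base-change step of Lemma 2.2(2) of the paper.) -/

import Mathlib

open scoped TensorProduct

/-- A torsion-free module over a PID is flat. -/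
lemma flat_of_torsionFree (A M : Type*) [CommRing A] [IsDomain A] [IsPrincipalIdealRing A]
    [AddCommGroup M] [Module A M] [NoZeroSMulDivisors A M] : Module.Flat A M := by
  rw [Module.Flat.iff_rTensor_injective']
  intro I
  obtain ⟨a, ha⟩ := (IsPrincipalIdealRing.principal I).principal
  by_cases h0 : a = 0
  · subst h0
    have hsub : Subsingleton (I ⊗[A] M) := by
      constructor
      intro u v
      have hz : ∀ w : I ⊗[A] M, w = 0 := by
        intro w
        induction w using TensorProduct.induction_on with
        | zero => rfl
        | tmul i m =>
          have h2 : (i : A) ∈ Submodule.span A {(0 : A)} := by rw [← ha]; exact i.2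
          rw [Submodule.span_zero_singleton, Submodule.mem_bot] at h2
          have : i = 0 := Subtype.ext h2
          rw [this, TensorProduct.zero_tmul]
        | add p q hp hq => rw [hp, hq, add_zero]
      rw [hz u, hz v]
    intro u v _
    exact Subsingleton.elim u v
  · have hmem : a ∈ I := by rw [ha]; exact Submodule.mem_span_singleton_self a
    let f : A →ₗ[A] I := LinearMap.toSpanSingleton A I ⟨a, hmem⟩
    have hfsurj : Function.Surjective f := by
      rintro ⟨y, hy⟩
      rw [ha, Submodule.mem_span_singleton] at hy
      obtain ⟨r, hr⟩ := hy
      exact ⟨r, by ext; simpa [f, LinearMap.toSpanSingleton_apply] using hr⟩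
    have hcomp : Function.Injective (LinearMap.rTensor M (I.subtype ∘ₗ f)) := by
      have key : ∀ z : A ⊗[A] M, (TensorProduct.lid A M) (LinearMap.rTensor M (I.subtype ∘ₗ f) z)
          = a • (TensorProduct.lid A M) z := by
        intro z
        induction z using TensorProduct.induction_on with
        | zero => simp
        | tmul r m =>
          simp [f, LinearMap.rTensor_tmul, LinearMap.toSpanSingleton_apply, smul_smul, mul_comm]
        | add p q hp hq => simp [hp, hq, smul_add]
      intro u v huv
      have h2 : a • (TensorProduct.lid A M) u = a • (TensorProduct.lid A M) v := by
        rw [← key, ← key, huv]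
      have h3 := smul_right_injective M h0 h2
      exact (TensorProduct.lid A M).injective h3
    rw [LinearMap.rTensor_comp] at hcomp
    have hsurj : Function.Surjective (LinearMap.rTensor M f) :=
      LinearMap.rTensor_surjective M hfsurj
    intro u v huv
    obtain ⟨u', rfl⟩ := hsurj u
    obtain ⟨v', rfl⟩ := hsurj v
    exact congrArg _ (hcomp (by simpa using huv))

set_option maxHeartbeats 1000000 in
theorem base_change_not_integrally_closed
    (A A' R : Type*) [CommRing A] [IsDomain A] [IsDiscreteValuationRing A]
    [CommRing A'] [IsDomain A'] [IsDiscreteValuationRing A']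
    [CommRing R] [Algebra A R] [NoZeroSMulDivisors A R] [Algebra A A']
    (t : A) (ht : Irreducible t) (t' : A') (ht' : Irreducible t')
    (c : A'ˣ) (n : ℕ) (hn : 1 ≤ n) (hφ : algebraMap A A' t = (c : A') * t' ^ n)
    (x : R) (hx : x ∉ Ideal.span {algebraMap A R t})
    (hxn : x ^ n ∈ Ideal.span {algebraMap A R t}) :
    (Algebra.TensorProduct.includeRight x : A' ⊗[A] R) ∉
        Ideal.span {algebraMap A' (A' ⊗[A] R) t'} ∧
    IsIntegral (A' ⊗[A] R)
      (IsLocalization.mk' (Localization.Away (algebraMap A' (A' ⊗[A] R) t'))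
        (Algebra.TensorProduct.includeRight x : A' ⊗[A] R)
        (⟨algebraMap A' (A' ⊗[A] R) t', 1, pow_one _⟩ :
          Submonoid.powers (algebraMap A' (A' ⊗[A] R) t'))) ∧
    (IsLocalization.mk' (Localization.Away (algebraMap A' (A' ⊗[A] R) t'))
        (Algebra.TensorProduct.includeRight x : A' ⊗[A] R)
        (⟨algebraMap A' (A' ⊗[A] R) t', 1, pow_one _⟩ :
          Submonoid.powers (algebraMap A' (A' ⊗[A] R) t'))) ∉
      (algebraMap (A' ⊗[A] R) (Localization.Away (algebraMap A' (A' ⊗[A] R) t'))).range := by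
  classical
  -- Part 1 : x' is not in t'R'
  have h1 : (Algebra.TensorProduct.includeRight x : A' ⊗[A] R) ∉
      Ideal.span {algebraMap A' (A' ⊗[A] R) t'} := by
    intro hmem
    obtain ⟨w, hw⟩ := Ideal.mem_span_singleton.mp hmem
    haveI hmaxA : (Ideal.span {t}).IsMaximal :=
      ht.maximalIdeal_eq ▸ IsLocalRing.maximalIdeal.isMaximal A
    haveI hmaxA' : (Ideal.span {t'}).IsMaximal :=
      ht'.maximalIdeal_eq ▸ IsLocalRing.maximalIdeal.isMaximal A'
    letI : Field (A ⧸ Ideal.span {t}) := Ideal.Quotient.field _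
    letI : Field (A' ⧸ Ideal.span {t'}) := Ideal.Quotient.field _
    have hle : Ideal.span {t} ≤ (Ideal.span {t'}).comap (algebraMap A A') := by
      rw [Ideal.span_le, Set.singleton_subset_iff]
      show algebraMap A A' t ∈ Ideal.span {t'}
      rw [hφ, Ideal.mem_span_singleton]
      exact dvd_mul_of_dvd_right (dvd_pow_self t' (by omega)) _
    let ι : (A ⧸ Ideal.span {t}) →+* (A' ⧸ Ideal.span {t'}) :=
      Ideal.quotientMap (Ideal.span {t'}) (algebraMap A A') hle
    letI : Algebra (A ⧸ Ideal.span {t}) (A' ⧸ Ideal.span {t'}) := ι.toAlgebra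
    obtain ⟨g, hg⟩ := LinearMap.exists_leftInverse_of_injective
      (Algebra.linearMap (A ⧸ Ideal.span {t}) (A' ⧸ Ideal.span {t'}))
      (LinearMap.ker_eq_bot.mpr (fun a b h => by simpa using h))
    have hleR : Ideal.span {t} ≤ (Ideal.span {algebraMap A R t}).comap (algebraMap A R) := by
      rw [Ideal.span_le, Set.singleton_subset_iff]
      show algebraMap A R t ∈ Ideal.span {algebraMap A R t}
      exact Ideal.subset_span rfl
    let ψ : (A ⧸ Ideal.span {t}) →+* (R ⧸ Ideal.span {algebraMap A R t}) :=
      Ideal.quotientMap (Ideal.span {algebraMap A R t}) (algebraMap A R) hleR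
    letI modkQ : Module (A ⧸ Ideal.span {t}) (R ⧸ Ideal.span {algebraMap A R t}) :=
      Module.compHom _ ψ
    let mkI : R →+* R ⧸ Ideal.span {algebraMap A R t} := Ideal.Quotient.mk _
    let mkT : A' →+* A' ⧸ Ideal.span {t'} := Ideal.Quotient.mk _
    have hAMap : ∀ a : A, algebraMap A (R ⧸ Ideal.span {algebraMap A R t}) a
        = mkI (algebraMap A R a) := by
      intro a
      exact IsScalarTower.algebraMap_apply A R _ a
    let B : A' →ₗ[A] R →ₗ[A] (R ⧸ Ideal.span {algebraMap A R t}) :=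
      LinearMap.mk₂ A (fun a' r => ψ (g (mkT a')) * mkI r)
        (fun a₁ a₂ r => by
          show ψ (g (mkT (a₁ + a₂))) * mkI r = _
          simp [add_mul])
        (fun a a' r => by
          show ψ (g (mkT (a • a'))) * mkI r = a • (ψ (g (mkT a')) * mkI r)
          have h1 : mkT (a • a') = (Ideal.Quotient.mk (Ideal.span {t}) a) • mkT a' := by
            rw [Algebra.smul_def, map_mul]
            rfl
          rw [h1, map_smul, smul_eq_mul, map_mul]
          have h2 : ψ (Ideal.Quotient.mk (Ideal.span {t}) a) = mkI (algebraMap A R a) :=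
            Ideal.quotientMap_mk
          rw [h2, Algebra.smul_def, hAMap]
          ring
        )
        (fun a' r₁ r₂ => by
          show ψ (g (mkT a')) * mkI (r₁ + r₂) = _
          simp [mul_add])
        (fun a a' r => by
          show ψ (g (mkT a')) * mkI (a • r) = a • (ψ (g (mkT a')) * mkI r)
          rw [Algebra.smul_def, map_mul, Algebra.smul_def, hAMap]
          ring
        )
    let F := TensorProduct.lift B
    have hg1 : g (1 : A' ⧸ Ideal.span {t'}) = 1 := by
      have h := LinearMap.congr_fun hg (1 : A ⧸ Ideal.span {t})
      simpa using h
    have hFx : F ((1 : A') ⊗ₜ[A] x) = mkI x := by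
      have : F ((1 : A') ⊗ₜ[A] x) = ψ (g (mkT 1)) * mkI x := rfl
      rw [this, map_one, hg1, map_one, one_mul]
    have hF0 : ∀ v : A' ⊗[A] R, F ((algebraMap A' (A' ⊗[A] R) t') * v) = 0 := by
      intro v
      induction v using TensorProduct.induction_on with
      | zero => simp
      | tmul a' r =>
        rw [Algebra.TensorProduct.algebraMap_apply, Algebra.TensorProduct.tmul_mul_tmul, one_mul]
        have hFt : F ((algebraMap A' A' t' * a') ⊗ₜ[A] r)
            = ψ (g (mkT (algebraMap A' A' t' * a'))) * mkI r := rfl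
        rw [hFt]
        have : mkT (algebraMap A' A' t' * a') = 0 := by
          apply Ideal.Quotient.eq_zero_iff_mem.mpr
          apply Ideal.mem_span_singleton.mpr
          simpa using dvd_mul_right t' a'
        rw [this, map_zero, map_zero, zero_mul]
      | add p q hp hq =>
        rw [mul_add, map_add, hp, hq, add_zero]
    have hzero : mkI x = 0 := by
      have hw' : ((1 : A') ⊗ₜ[A] x : A' ⊗[A] R) = algebraMap A' (A' ⊗[A] R) t' * w := by
        rw [← hw]
        rfl
      rw [← hFx, hw', hF0 w]
    exact hx (by rwa [Ideal.Quotient.eq_zero_iff_mem] at hzero)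
  -- regularity of t' on R'
  haveI : Module.Flat A R := flat_of_torsionFree A R
  have hreg : algebraMap A' (A' ⊗[A] R) t' ∈ nonZeroDivisors (A' ⊗[A] R) := by
    rw [mem_nonZeroDivisors_iff_right]
    intro z hz
    have hkey : ∀ z : A' ⊗[A] R, LinearMap.rTensor R (LinearMap.mulLeft A t') z
        = algebraMap A' (A' ⊗[A] R) t' * z := by
      intro z
      induction z using TensorProduct.induction_on with
      | zero => simp
      | tmul a' r =>
        rw [LinearMap.rTensor_tmul, Algebra.TensorProduct.algebraMap_apply,
          Algebra.TensorProduct.tmul_mul_tmul]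
        simp
      | add p q hp hq => rw [map_add, hp, hq, mul_add]
    have hinj : Function.Injective (LinearMap.rTensor R (LinearMap.mulLeft A t')) :=
      Module.Flat.rTensor_preserves_injective_linearMap _
        (fun a b h => mul_left_cancel₀ ht'.ne_zero (by simpa using h))
    have h0 : LinearMap.rTensor R (LinearMap.mulLeft A t') z = 0 := by
      rw [hkey, mul_comm]
      exact hz
    have h00 : LinearMap.rTensor R (LinearMap.mulLeft A t') z
        = LinearMap.rTensor R (LinearMap.mulLeft A t') 0 := by rw [h0, map_zero]
    exact hinj h00
  have hleND : Submonoid.powers (algebraMap A' (A' ⊗[A] R) t')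
      ≤ nonZeroDivisors (A' ⊗[A] R) := Submonoid.powers_le.mpr hreg
  have hinjS : Function.Injective (algebraMap (A' ⊗[A] R)
      (Localization.Away (algebraMap A' (A' ⊗[A] R) t'))) :=
    IsLocalization.injective _ hleND
  -- identity x'^n = (c * r') * t'^n
  obtain ⟨r, hr⟩ := Ideal.mem_span_singleton.mp hxn
  have hxid : (Algebra.TensorProduct.includeRight x : A' ⊗[A] R) ^ n
      = (algebraMap A' (A' ⊗[A] R) (c : A') * Algebra.TensorProduct.includeRight r)
        * (algebraMap A' (A' ⊗[A] R) t') ^ n := by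
    have h1 : (Algebra.TensorProduct.includeRight x : A' ⊗[A] R) ^ n
        = Algebra.TensorProduct.includeRight (x ^ n) := (map_pow _ _ _).symm
    have h2 : (Algebra.TensorProduct.includeRight (algebraMap A R t) : A' ⊗[A] R)
        = algebraMap A' (A' ⊗[A] R) ((c : A') * t' ^ n) := by
      rw [Algebra.TensorProduct.includeRight_apply, ← Algebra.TensorProduct.algebraMap_apply',
        IsScalarTower.algebraMap_apply A A' (A' ⊗[A] R), hφ]
    rw [h1, hr, map_mul, h2, map_mul, map_pow]
    ring
  have hspec := IsLocalization.mk'_spec (Localization.Away (algebraMap A' (A' ⊗[A] R) t'))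
    (Algebra.TensorProduct.includeRight x : A' ⊗[A] R)
    (⟨algebraMap A' (A' ⊗[A] R) t', 1, pow_one _⟩ :
      Submonoid.powers (algebraMap A' (A' ⊗[A] R) t'))
  have hun : (IsLocalization.mk' (Localization.Away (algebraMap A' (A' ⊗[A] R) t'))
        (Algebra.TensorProduct.includeRight x : A' ⊗[A] R)
        (⟨algebraMap A' (A' ⊗[A] R) t', 1, pow_one _⟩ :
          Submonoid.powers (algebraMap A' (A' ⊗[A] R) t'))) ^ n
      = algebraMap (A' ⊗[A] R) _
          (algebraMap A' (A' ⊗[A] R) (c : A') * Algebra.TensorProduct.includeRight r) := by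
    have hUnit : IsUnit ((algebraMap (A' ⊗[A] R)
        (Localization.Away (algebraMap A' (A' ⊗[A] R) t'))
        (algebraMap A' (A' ⊗[A] R) t')) ^ n) :=
      (IsLocalization.map_units _
        (⟨algebraMap A' (A' ⊗[A] R) t', 1, pow_one _⟩ :
          Submonoid.powers (algebraMap A' (A' ⊗[A] R) t'))).pow n
    apply hUnit.mul_right_cancel
    rw [← mul_pow, hspec]
    conv_rhs => rw [← map_pow, ← map_mul]
    rw [← map_pow, hxid]
  refine ⟨h1, ?_, ?_⟩
  · refine ⟨Polynomial.X ^ n - Polynomial.C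
      (algebraMap A' (A' ⊗[A] R) (c : A') * Algebra.TensorProduct.includeRight r),
      Polynomial.monic_X_pow_sub_C _ (by omega), ?_⟩
    rw [Polynomial.eval₂_sub, Polynomial.eval₂_X_pow, Polynomial.eval₂_C, hun, sub_self]
  · rintro ⟨z, hz⟩
    apply h1
    rw [Ideal.mem_span_singleton]
    refine ⟨z, ?_⟩
    apply hinjS
    rw [map_mul, hz, mul_comm]
    exact hspec.symm
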